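/- Let E₃ = {(k−i, ik) : i = 0, 1, ..., k} ⊆ ℕ² with k ≥ 1. Then for all sufficiently large s, ω_{E₃}(s) = k²(k+1)/2. -/
import Mathlib


open Filter Finset Polynomial

/-- The binomial coefficient polynomial C(x, k) = x(x-1)...(x-k+1)/k! over ℚ. -/
noncomputable def qchoose (x : ℚ) (k : ℕ) : ℚ :=
  (∏ i ∈ Finset.range k, (x - i)) / (Nat.factorial k)


/-- ω_E(s): number of points of ℕ^m of order ≤ s not componentwise above any element of E. -/
noncomputable def omegaE {m : ℕ} (E : Set (Fin m → ℕ)) (s : ℕ) : ℕ :=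
  Set.ncard {x : Fin m → ℕ | (∑ i, x i) ≤ s ∧ ∀ e ∈ E, ¬ e ≤ x}

lemma gauss' (k : ℕ) : 2 * ∑ a ∈ Finset.range k, (a + 1) = k * (k + 1) := by
  induction k with
  | zero => simp
  | succ n ih => rw [Finset.sum_range_succ, Nat.mul_add, ih]; ring

lemma gauss (k : ℕ) : 2 * ∑ a ∈ Finset.range k, (k - a) = k * (k + 1) := by
  have h : ∑ a ∈ Finset.range k, (k - a) = ∑ a ∈ Finset.range k, (a + 1) := by
    rw [← Finset.sum_range_reflect (fun j => j + 1) k]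
    exact Finset.sum_congr rfl fun a ha => by
      simp only [Finset.mem_range] at ha; omega
  rw [h, gauss']

/-- For E₃ = {(k-i, ik) : 0 ≤ i ≤ k} ⊆ ℕ² with k ≥ 1, eventually ω_{E₃}(s) = k²(k+1)/2. -/
theorem omegaE_staircase (k : ℕ) (hk : 1 ≤ k) :
    ∀ᶠ s : ℕ in Filter.atTop,
      2 * omegaE {x : Fin 2 → ℕ | ∃ i ≤ k, x = ![k - i, i * k]} s = k ^ 2 * (k + 1) := by
  filter_upwards [Filter.eventually_ge_atTop (k + k * k)] with s hs
  set F : Finset (ℕ × ℕ) :=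
    (Finset.range k).biUnion (fun a => {a} ×ˢ Finset.range ((k - a) * k)) with hF
  have hmemF : ∀ p : ℕ × ℕ, p ∈ F ↔ p.1 < k ∧ p.2 < (k - p.1) * k := by
    intro p
    simp only [hF, Finset.mem_biUnion, Finset.mem_range, Finset.mem_product,
      Finset.mem_singleton]
    constructor
    · rintro ⟨a, ha, h1, h2⟩; subst h1; exact ⟨ha, h2⟩
    · rintro ⟨h1, h2⟩; exact ⟨p.1, h1, rfl, h2⟩
  have hinj : Function.Injective (fun p : ℕ × ℕ => ![p.1, p.2]) := by
    intro p q h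
    have h0 := congrFun h 0
    have h1 := congrFun h 1
    simp at h0 h1
    exact Prod.ext h0 h1
  have hset : {x : Fin 2 → ℕ | (∑ i, x i) ≤ s ∧
      ∀ e ∈ {x : Fin 2 → ℕ | ∃ i ≤ k, x = ![k - i, i * k]}, ¬ e ≤ x}
      = (fun p : ℕ × ℕ => ![p.1, p.2]) '' ↑F := by
    ext x
    simp only [Set.mem_setOf_eq, Set.mem_image, Finset.mem_coe]
    constructor
    · rintro ⟨hsum, hdom⟩
      have hx0 : x 0 < k := by
        have h := hdom ![k - 0, 0 * k] ⟨0, by omega, rfl⟩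
        by_contra hc
        exact h (by intro j; fin_cases j <;> simp <;> omega)
      have hx1 : x 1 < (k - x 0) * k := by
        have h := hdom ![k - (k - x 0), (k - x 0) * k] ⟨k - x 0, by omega, rfl⟩
        by_contra hc
        exact h (by intro j; fin_cases j <;> simp <;> omega)
      refine ⟨(x 0, x 1), (hmemF _).2 ⟨hx0, hx1⟩, ?_⟩
      funext j; fin_cases j <;> simp
    · rintro ⟨p, hp, rfl⟩
      obtain ⟨h1, h2⟩ := (hmemF p).1 hp
      constructor
      · have hle : (k - p.1) * k ≤ k * k := Nat.mul_le_mul_right _ (by omega)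
        rw [Fin.sum_univ_two]
        simp only [Matrix.cons_val_zero, Matrix.cons_val_one, Matrix.head_cons]
        omega
      · rintro e ⟨i, hi, rfl⟩ hle
        have e0 := hle 0
        have e1 := hle 1
        simp only [Matrix.cons_val_zero, Matrix.cons_val_one, Matrix.head_cons] at e0 e1
        have : (k - p.1) * k ≤ i * k := Nat.mul_le_mul_right _ (by omega)
        omega
  rw [omegaE, hset, Set.ncard_image_of_injective _ hinj, Set.ncard_coe_finset]
  have hcard : F.card = ∑ a ∈ Finset.range k, (k - a) * k := by
    rw [hF, Finset.card_biUnion]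
    · exact Finset.sum_congr rfl fun a _ => by
        rw [Finset.card_product, Finset.card_singleton, Finset.card_range, one_mul]
    · intro a _ b _ hab
      simp only [Finset.disjoint_left, Finset.mem_product, Finset.mem_singleton]
      rintro p ⟨rfl, -⟩ ⟨h, -⟩
      exact hab h
  rw [hcard, ← Finset.sum_mul, ← Nat.mul_assoc, gauss]
  ring
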